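/- Let p be a prime, ψ a standard character of ℚ_p, m ≥ 1 an integer, and ξ_0, ξ_1, …, ξ_{m−1} points of ℚ_p (repetitions allowed). If ∑_{j=0}^{m−1} ψ(ξ_j) = 0, then p divides m, and for every x ∈ ℚ_p with |x|_p = 1 one has ∑_{j=0}^{m−1} ψ(x ξ_j) = 0. -/

import Mathlib

noncomputable section

/-- A standard character of `ℚ_p`. -/
def IsStdChar (p : ℕ) [Fact p.Prime] (ψ : ℚ_[p] → ℂ) : Prop :=
  Continuous ψ ∧ (∀ x y, ψ (x + y) = ψ x * ψ y) ∧ (∀ x, ‖ψ x‖ = 1) ∧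
    (∀ x : ℚ_[p], ‖x‖ ≤ 1 → ψ x = 1) ∧ ∃ x : ℚ_[p], ‖x‖ ≤ p ∧ ψ x ≠ 1

/-- if `∑_{j<m} ψ(ξ_j) = 0` then `p ∣ m`, and `∑_{j<m} ψ(x ξ_j) = 0` for every
unit `x` (i.e. `|x|_p = 1`). -/
theorem vanishing_sum_rotation_invariant
    (p : ℕ) [Fact p.Prime] (ψ : ℚ_[p] → ℂ) (hψ : IsStdChar p ψ)
    (m : ℕ) (hm : 1 ≤ m) (ξ : Fin m → ℚ_[p])
    (hsum : ∑ j, ψ (ξ j) = 0) :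
    p ∣ m ∧ ∀ x : ℚ_[p], ‖x‖ = 1 → ∑ j, ψ (x * ξ j) = 0 := by
  obtain ⟨-, hmul, -, htriv, -⟩ := hψ
  have hp1 : (1 : ℝ) < p := by exact_mod_cast (Fact.out : p.Prime).one_lt
  have hψ0 : ψ 0 = 1 := htriv 0 (by simp)
  -- ψ of natural multiples
  have hpow : ∀ (n : ℕ) (x : ℚ_[p]), ψ ((n : ℚ_[p]) * x) = ψ x ^ n := by
    intro n x
    induction n with
    | zero => simpa using hψ0
    | succ n ih =>
      push_cast
      rw [add_mul, one_mul, hmul, ih, pow_succ]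
  -- choose N with ‖p^N ξ_j‖ ≤ 1 for all j
  have hstep : ∀ j, ∃ n : ℕ, ‖(p : ℚ_[p]) ^ n * ξ j‖ ≤ 1 := by
    intro j
    obtain ⟨n, hn⟩ := pow_unbounded_of_one_lt (‖ξ j‖) hp1
    refine ⟨n, ?_⟩
    rw [norm_mul, norm_pow, Padic.norm_p]
    rw [inv_pow]
    rw [inv_mul_le_iff₀ (by positivity), mul_one]
    exact hn.le
  choose f hf using hstep
  set N : ℕ := (Finset.univ.sup f) + 1 with hN
  have hNbound : ∀ j, ‖(p : ℚ_[p]) ^ N * ξ j‖ ≤ 1 := by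
    intro j
    have hfj : f j ≤ N := le_trans (Finset.le_sup (Finset.mem_univ j)) (Nat.le_succ _)
    have : (p : ℚ_[p]) ^ N * ξ j = (p : ℚ_[p]) ^ (N - f j) * ((p : ℚ_[p]) ^ (f j) * ξ j) := by
      rw [← mul_assoc, ← pow_add, Nat.sub_add_cancel hfj]
    rw [this, norm_mul]
    have h1 : ‖(p : ℚ_[p]) ^ (N - f j)‖ ≤ 1 := by
      rw [norm_pow, Padic.norm_p]
      exact pow_le_one₀ (by positivity) (inv_le_one_of_one_le₀ hp1.le)
    calc ‖(p : ℚ_[p]) ^ (N - f j)‖ * ‖(p : ℚ_[p]) ^ (f j) * ξ j‖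
        ≤ 1 * 1 := mul_le_mul h1 (hf j) (norm_nonneg _) zero_le_one
      _ = 1 := mul_one 1
  have hpN0 : (p : ℕ) ^ N ≠ 0 := pow_ne_zero _ (Fact.out : p.Prime).ne_zero
  have : NeZero (p ^ N) := ⟨hpN0⟩
  -- roots of unity
  have hroot : ∀ j, ψ (ξ j) ^ (p ^ N) = 1 := by
    intro j
    rw [← hpow]
    push_cast
    exact htriv _ (hNbound j)
  set ζ : ℂ := Complex.exp (2 * Real.pi * Complex.I / (p ^ N : ℕ)) with hζdef
  have hζ : IsPrimitiveRoot ζ (p ^ N) := Complex.isPrimitiveRoot_exp _ hpN0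
  have ha : ∀ j, ∃ i : ℕ, ζ ^ i = ψ (ξ j) := by
    intro j
    obtain ⟨i, -, hi⟩ := hζ.eq_pow_of_pow_eq_one (hroot j)
    exact ⟨i, hi⟩
  choose a haa using ha
  -- the polynomial
  set F : Polynomial ℤ := ∑ j, Polynomial.X ^ (a j) with hF
  have haevalF : ∀ z : ℂ, Polynomial.aeval z F = ∑ j, z ^ (a j) := by
    intro z; simp [hF]
  have hFζ : Polynomial.aeval ζ F = 0 := by
    rw [haevalF]
    rw [← hsum]
    exact Finset.sum_congr rfl fun j _ => haa j
  have hminp : Polynomial.cyclotomic (p ^ N) ℚ = minpoly ℚ ζ :=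
    Polynomial.cyclotomic_eq_minpoly_rat hζ (Nat.pos_of_ne_zero hpN0)
  have hdvdQ : Polynomial.cyclotomic (p ^ N) ℚ ∣ F.map (Int.castRingHom ℚ) := by
    rw [hminp]
    apply minpoly.dvd
    rw [show ((Int.castRingHom ℚ) : ℤ →+* ℚ) = algebraMap ℤ ℚ from rfl,
      Polynomial.aeval_map_algebraMap]
    exact hFζ
  have hdvdZ : Polynomial.cyclotomic (p ^ N) ℤ ∣ F := by
    have := hdvdQ
    rw [← Polynomial.map_cyclotomic_int (p ^ N) ℚ] at this
    exact (Polynomial.map_dvd_map (Int.castRingHom ℚ)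
      Int.cast_injective (Polynomial.cyclotomic.monic _ ℤ)).mp this
  constructor
  · -- p ∣ m
    obtain ⟨g, hg⟩ := hdvdZ
    have h1 : Polynomial.eval 1 F = (m : ℤ) := by
      simp [hF, Polynomial.eval_finset_sum]
    have h2 : Polynomial.eval 1 (Polynomial.cyclotomic (p ^ N) ℤ) = (p : ℤ) := by
      have : p ^ N = p ^ ((Finset.univ.sup f) + 1) := by rw [hN]
      rw [this, Polynomial.eval_one_cyclotomic_prime_pow]
    have : (m : ℤ) = (p : ℤ) * Polynomial.eval 1 g := by
      rw [← h1, hg, Polynomial.eval_mul, h2]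
    exact Int.natCast_dvd_natCast.mp ⟨_, this⟩
  · -- rotation invariance
    intro x hx
    set z : ℤ_[p] := ⟨x, hx.le⟩ with hz
    set c : ℕ := PadicInt.appr z N with hc
    obtain ⟨w, hw⟩ := Ideal.mem_span_singleton.mp (PadicInt.appr_spec N z)
    -- x - c = p^N * w  in ℚ_p
    have hxc : x - (c : ℚ_[p]) = (p : ℚ_[p]) ^ N * (w : ℚ_[p]) := by
      have := congrArg (fun t : ℤ_[p] => (t : ℚ_[p])) hw
      push_cast at this
      simpa using this
    -- ψ(x ξ_j) = ψ(ξ_j)^c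
    have hrot : ∀ j, ψ (x * ξ j) = ψ (ξ j) ^ c := by
      intro j
      have hsplit : x * ξ j = (c : ℚ_[p]) * ξ j + (x - c) * ξ j := by ring
      have htail : ψ ((x - (c : ℚ_[p])) * ξ j) = 1 := by
        apply htriv
        have hre : (x - (c : ℚ_[p])) * ξ j = (w : ℚ_[p]) * ((p : ℚ_[p]) ^ N * ξ j) := by
          rw [hxc]; ring
        rw [hre, norm_mul]
        calc ‖(w : ℚ_[p])‖ * ‖(p : ℚ_[p]) ^ N * ξ j‖ ≤ 1 * 1 :=
          mul_le_mul (PadicInt.norm_le_one w) (hNbound j) (norm_nonneg _) zero_le_one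
          _ = 1 := mul_one 1
      rw [hsplit, hmul, htail, mul_one, hpow]
    -- c is coprime to p
    have hnormc : ‖(c : ℚ_[p])‖ = 1 := by
      have hsmall : ‖x - (c : ℚ_[p])‖ < 1 := by
        rw [hxc, norm_mul, norm_pow, Padic.norm_p]
        calc (p : ℝ)⁻¹ ^ N * ‖(w : ℚ_[p])‖ ≤ (p : ℝ)⁻¹ ^ N * 1 :=
              mul_le_mul_of_nonneg_left (PadicInt.norm_le_one w) (by positivity)
          _ = (p : ℝ)⁻¹ ^ N := mul_one _
          _ < 1 := pow_lt_one₀ (by positivity) (inv_lt_one_of_one_lt₀ hp1)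
            (Nat.succ_ne_zero _)
      have hne : ‖x‖ ≠ ‖(c : ℚ_[p]) - x‖ := by
        rw [hx, norm_sub_rev]
        exact fun h => (ne_of_lt hsmall) h.symm
      have hdec : (c : ℚ_[p]) = x + ((c : ℚ_[p]) - x) := by ring
      rw [hdec, Padic.add_eq_max_of_ne hne, hx, norm_sub_rev]
      exact max_eq_left hsmall.le
    have hcop : Nat.Coprime c (p ^ N) := by
      apply Nat.Coprime.pow_right
      rw [Nat.coprime_comm]
      apply ((Fact.out : p.Prime).coprime_iff_not_dvd).mpr
      intro hdvd
      have : ‖((c : ℤ) : ℚ_[p])‖ < 1 :=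
        (Padic.norm_intCast_lt_one_iff (k := (c : ℤ))).mpr (Int.natCast_dvd_natCast.mpr hdvd)
      rw [show (((c : ℤ) : ℚ_[p])) = ((c : ℕ) : ℚ_[p]) by push_cast; ring] at this
      rw [hnormc] at this
      exact lt_irrefl 1 this
    have hζc : IsPrimitiveRoot (ζ ^ c) (p ^ N) := hζ.pow_of_coprime c hcop
    have hminp' : Polynomial.cyclotomic (p ^ N) ℚ = minpoly ℚ (ζ ^ c) :=
      Polynomial.cyclotomic_eq_minpoly_rat hζc (Nat.pos_of_ne_zero hpN0)
    have hFζc : Polynomial.aeval (ζ ^ c) F = 0 := by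
      obtain ⟨g, hg⟩ := hdvdQ
      have : Polynomial.aeval (ζ ^ c) (F.map (Int.castRingHom ℚ)) = 0 := by
        rw [hg, map_mul, hminp', minpoly.aeval, zero_mul]
      rwa [show ((Int.castRingHom ℚ) : ℤ →+* ℚ) = algebraMap ℤ ℚ from rfl,
        Polynomial.aeval_map_algebraMap] at this
    rw [haevalF] at hFζc
    rw [← hFζc]
    apply Finset.sum_congr rfl
    intro j _
    rw [hrot j, ← haa j, ← pow_mul, ← pow_mul, mul_comm]
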